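/- Let R ≥ 2, L ⊕ L' = {0,...,R−1} with L, L' ⊂ {0,...,R−1}, and let G_Γ(z,x) = Σ_{γ∈Γ} z^γ e^{−2πiγx} for a set Γ ⊂ ℕ₀. Then G_{Γ(L)}(z,x) · G_{Γ(L')}(z,x) = 1/(1 − z e^{−2πix}) for all |z| < 1 and x ∈ ℝ. -/

import Mathlib

open Complex Real

/-- `L ⊕ L' = {0,…,R−1}`: the sum map `L × L' → {0,…,R−1}` is a bijection. -/
def ComplPair (L L' : Finset ℕ) (R : ℕ) : Prop :=
  (∀ l ∈ L, ∀ l' ∈ L', l + l' < R) ∧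
    ∀ k < R, ∃! p : ℕ × ℕ, p.1 ∈ L ∧ p.2 ∈ L' ∧ p.1 + p.2 = k

/-- `Γ(L)`: nonnegative integers whose base-`R` digits all lie in `L`. -/
def GammaSet (R : ℕ) (L : Finset ℕ) : Set ℕ :=
  {n : ℕ | ∃ (m : ℕ) (f : ℕ → ℕ), (∀ i, f i ∈ L) ∧
    n = ∑ k ∈ Finset.range (m + 1), R ^ k * f k}

lemma gamma_zero (R : ℕ) (L : Finset ℕ) (h0 : 0 ∈ L) : 0 ∈ GammaSet R L :=
  ⟨0, fun _ => 0, fun _ => h0, by simp⟩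

lemma gamma_step (R : ℕ) (L : Finset ℕ) {a l : ℕ} (ha : a ∈ GammaSet R L) (hl : l ∈ L) :
    R * a + l ∈ GammaSet R L := by
  obtain ⟨m, f, hf, rfl⟩ := ha
  refine ⟨m + 1, fun i => Nat.rec l (fun i _ => f i) i, fun i => by cases i <;> simp [hl, hf], ?_⟩
  conv_rhs => rw [Finset.sum_range_succ']
  show R * (∑ k ∈ Finset.range (m + 1), R ^ k * f k) + l
      = (∑ k ∈ Finset.range (m + 1), R ^ (k + 1) * f k) + R ^ 0 * l
  rw [Finset.mul_sum, pow_zero, one_mul]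
  congr 1
  apply Finset.sum_congr rfl
  intro k _
  ring

lemma gamma_div_mod (R : ℕ) (hR : 2 ≤ R) (L : Finset ℕ) (h0 : 0 ∈ L)
    (hL : ∀ l ∈ L, l < R) {n : ℕ} (hn : n ∈ GammaSet R L) :
    n % R ∈ L ∧ n / R ∈ GammaSet R L := by
  obtain ⟨m, f, hf, rfl⟩ := hn
  have key : ∑ k ∈ Finset.range (m + 1), R ^ k * f k
      = R * (∑ k ∈ Finset.range m, R ^ k * f (k + 1)) + f 0 := by
    rw [Finset.sum_range_succ']
    simp only [pow_zero, one_mul, Finset.mul_sum]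
    congr 1
    apply Finset.sum_congr rfl
    intro k _
    ring
  rw [key]
  have hf0 : f 0 < R := hL _ (hf 0)
  constructor
  · rw [Nat.mul_add_mod, Nat.mod_eq_of_lt hf0]; exact hf 0
  · rw [Nat.mul_add_div (by omega), Nat.div_eq_of_lt hf0, add_zero]
    cases m with
    | zero => simpa using gamma_zero R L h0
    | succ m' => exact ⟨m', fun i => f (i + 1), fun i => hf _, rfl⟩

lemma compl_zero {L L' : Finset ℕ} {R : ℕ} (hR : 2 ≤ R) (h : ComplPair L L' R) :
    0 ∈ L ∧ 0 ∈ L' := by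
  obtain ⟨p, ⟨h1, h2, h3⟩, -⟩ := h.2 0 (by omega)
  obtain ⟨hp1, hp2⟩ : p.1 = 0 ∧ p.2 = 0 := by omega
  rw [hp1] at h1; rw [hp2] at h2; exact ⟨h1, h2⟩

lemma decomp (R : ℕ) (hR : 2 ≤ R) (L L' : Finset ℕ)
    (hL : ∀ l ∈ L, l < R) (hL' : ∀ l ∈ L', l < R) (h : ComplPair L L' R) :
    ∀ n : ℕ, ∃! p : ℕ × ℕ, p.1 ∈ GammaSet R L ∧ p.2 ∈ GammaSet R L' ∧ p.1 + p.2 = n := by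
  obtain ⟨h0, h0'⟩ := compl_zero hR h
  intro n
  induction n using Nat.strong_induction_on with
  | _ n IH =>
    rcases Nat.eq_zero_or_pos n with rfl | hpos
    · refine ⟨(0, 0), ⟨gamma_zero R L h0, gamma_zero R L' h0', rfl⟩, ?_⟩
      rintro ⟨a, b⟩ ⟨-, -, hab⟩
      simp only [Prod.mk.injEq]
      omega
    · have hq : n / R < n := Nat.div_lt_self hpos (by omega)
      obtain ⟨⟨a, b⟩, ⟨ha, hb, hab⟩, huq⟩ := IH (n / R) hq
      obtain ⟨⟨l, l'⟩, ⟨hl, hl', hll⟩, hur⟩ := h.2 (n % R) (Nat.mod_lt _ (by omega))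
      refine ⟨(R * a + l, R * b + l'), ⟨gamma_step R L ha hl, gamma_step R L' hb hl', ?_⟩, ?_⟩
      · show R * a + l + (R * b + l') = n
        have h1 : R * a + R * b = R * (n / R) := by rw [← Nat.mul_add, hab]
        have h2 := Nat.div_add_mod n R
        omega
      · rintro ⟨c, d⟩ ⟨hc, hd, hcd⟩
        simp only at hcd
        obtain ⟨hcm, hcq⟩ := gamma_div_mod R hR L h0 hL hc
        obtain ⟨hdm, hdq⟩ := gamma_div_mod R hR L' h0' hL' hd
        have hlt : c % R + d % R < R := h.1 _ hcm _ hdm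
        have hc' : c = R * (c / R) + c % R := (Nat.div_add_mod c R).symm
        have hd' : d = R * (d / R) + d % R := (Nat.div_add_mod d R).symm
        have hn : n = R * (c / R + d / R) + (c % R + d % R) := by
          rw [Nat.mul_add]; omega
        have hmod : n % R = c % R + d % R := by
          rw [hn, Nat.mul_add_mod, Nat.mod_eq_of_lt hlt]
        have hdiv : n / R = c / R + d / R := by
          rw [hn, Nat.mul_add_div (by omega), Nat.div_eq_of_lt hlt, add_zero]
        have e1 := hur (c % R, d % R) ⟨hcm, hdm, hmod.symm⟩
        have e2 := huq (c / R, d / R) ⟨hcq, hdq, hdiv.symm⟩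
        simp only [Prod.mk.injEq] at e1 e2
        have g1 : c = R * a + l := by rw [hc', e2.1, e1.1]
        have g2 : d = R * b + l' := by rw [hd', e2.2, e1.2]
        simp only [Prod.mk.injEq]
        exact ⟨g1, g2⟩

/-- With `G_Γ(z,x) = ∑_{γ∈Γ} z^γ e^{−2πiγx}`, if `L ⊕ L' = {0,…,R−1}` then
`G_{Γ(L)}(z,x) · G_{Γ(L')}(z,x) = 1/(1 − z e^{−2πix})` for `|z| < 1`, `x ∈ ℝ`. -/
theorem stmt9 (R : ℕ) (hR : 2 ≤ R) (L L' : Finset ℕ)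
    (hL : ∀ l ∈ L, l < R) (hL' : ∀ l ∈ L', l < R) (h : ComplPair L L' R)
    (G : Set ℕ → ℂ → ℝ → ℂ)
    (hG : ∀ (Γ : Set ℕ) (z : ℂ) (x : ℝ), G Γ z x =
      ∑' γ : Γ, z ^ (γ : ℕ) * Complex.exp (-(2 * Real.pi * Complex.I * (γ : ℕ) * x)))
    (z : ℂ) (hz : ‖z‖ < 1) (x : ℝ) :
    G (GammaSet R L) z x * G (GammaSet R L') z x =
      (1 - z * Complex.exp (-(2 * Real.pi * Complex.I * x)))⁻¹ := by
  set w : ℂ := z * Complex.exp (-(2 * Real.pi * Complex.I * x)) with hw_def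
  have hw : ‖w‖ < 1 := by
    rw [hw_def, norm_mul]
    have : ‖Complex.exp (-(2 * Real.pi * Complex.I * x))‖ = 1 := by
      rw [Complex.norm_exp]
      simp
    rw [this, mul_one]
    exact hz
  -- rewrite summands
  have hterm : ∀ n : ℕ, z ^ n * Complex.exp (-(2 * Real.pi * Complex.I * (n : ℂ) * x)) = w ^ n := by
    intro n
    have : -(2 * (Real.pi : ℂ) * Complex.I * (n : ℂ) * (x : ℂ))
        = (n : ℂ) * (-(2 * Real.pi * Complex.I * x)) := by ring
    rw [this, Complex.exp_nat_mul, hw_def, mul_pow]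
  have hkey : ∀ Γ : Set ℕ, G Γ z x = ∑' γ : Γ, w ^ (γ : ℕ) := by
    intro Γ
    rw [hG]
    exact tsum_congr fun γ => hterm γ
  rw [hkey, hkey]
  -- bijection
  have hdec := decomp R hR L L' hL hL' h
  have hbij : Function.Bijective
      (fun p : GammaSet R L × GammaSet R L' => (p.1 : ℕ) + (p.2 : ℕ)) := by
    constructor
    · rintro ⟨⟨a, ha⟩, ⟨b, hb⟩⟩ ⟨⟨c, hc⟩, ⟨d, hd⟩⟩ hab
      simp only at hab
      obtain ⟨p0, -, hu⟩ := hdec (a + b)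
      have e1 := hu (a, b) ⟨ha, hb, rfl⟩
      have e2 := hu (c, d) ⟨hc, hd, hab.symm⟩
      rw [← e2] at e1
      simp only [Prod.mk.injEq] at e1
      simp [Prod.ext_iff, Subtype.ext_iff, e1.1, e1.2]
    · intro n
      obtain ⟨⟨a, b⟩, ⟨ha, hb, hab⟩, -⟩ := hdec n
      exact ⟨(⟨a, ha⟩, ⟨b, hb⟩), hab⟩
  let e := Equiv.ofBijective _ hbij
  have hsn : Summable fun n : ℕ => ‖w ^ n‖ := by
    simpa using summable_geometric_of_lt_one (norm_nonneg w) hw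
  have hnormL : Summable fun γ : GammaSet R L => ‖w ^ (γ : ℕ)‖ := hsn.subtype _
  have hnormL' : Summable fun γ : GammaSet R L' => ‖w ^ (γ : ℕ)‖ := hsn.subtype _
  rw [tsum_mul_tsum_of_summable_norm hnormL hnormL']
  have : ∀ p : GammaSet R L × GammaSet R L',
      w ^ (p.1 : ℕ) * w ^ (p.2 : ℕ) = w ^ (e p) := by
    intro p
    rw [← pow_add]
    rfl
  rw [tsum_congr this, e.tsum_eq (fun n => w ^ n), tsum_geometric_of_norm_lt_one hw]
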